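/- A cyclic word ω over a binary ordered alphabet {a < b} is not balanced if and only if there exists a palindrome x such that both axa and bxb occur as factors of ω; moreover, in that case these two occurrences cannot overlap. -/

import Mathlib

/-- The lexicographic order on words induced by the order of the alphabet, with the
convention that `u ≺ v` whenever `v` is a proper prefix of `u`. -/
def wlt {A : Type*} [LinearOrder A] (u v : List A) : Prop :=
  (v ≠ u ∧ v <+: u) ∨
    ∃ (p s t : List A) (x y : A), x < y ∧ u = p ++ x :: s ∧ v = p ++ y :: t

/-- The alternating lexicographic order on words: at the first difference, the order of
letters is used at even (0-based) positions and reversed at odd positions; if `v` is a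
proper prefix of `u` then `u ≺_alt v` when `|v|` is even and `v ≺_alt u` when `|v|` is odd. -/
def altlt {A : Type*} [LinearOrder A] (u v : List A) : Prop :=
  (v ≠ u ∧ v <+: u ∧ Even v.length) ∨ (u ≠ v ∧ u <+: v ∧ Odd u.length) ∨
    ∃ (p s t : List A) (x y : A), u = p ++ x :: s ∧ v = p ++ y :: t ∧
      ((Even p.length ∧ x < y) ∨ (Odd p.length ∧ y < x))

/-- `r` is a linear representation (rotation) of the cyclic word represented by `w`. -/
def isRot {A : Type*} (w r : List A) : Prop := ∃ s t : List A, w = s ++ t ∧ r = t ++ s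

/-- `f` is a factor of the cyclic word represented by `w`. -/
def isCFactor {A : Type*} (f w : List A) : Prop := ∃ r : List A, isRot w r ∧ f <:+: r

/-- The cyclic word represented by `w` is singular: every factorization of it into two
nonempty non-palindromes `u`, `v` is synchronizing (`u ≺ u*` iff `v ≺ v*`). -/
def cyclicSingular {A : Type*} [LinearOrder A] (w : List A) : Prop :=
  ∀ u v : List A, u ≠ [] → v ≠ [] → isRot w (u ++ v) →
    u ≠ u.reverse → v ≠ v.reverse → (wlt u u.reverse ↔ wlt v v.reverse)

/-- `δ_b(w) = Σ_{c>b} |w|_c − Σ_{a<b} |w|_a`. -/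
def deltaW {A : Type*} [LinearOrder A] [Fintype A] (w : List A) (b : A) : ℤ :=
  (∑ c ∈ Finset.univ.filter (fun c => b < c), (w.count c : ℤ)) -
    (∑ a ∈ Finset.univ.filter (fun a => a < b), (w.count a : ℤ))

section helpers
variable {A : Type*}

lemma rot_isRot (w : List A) (i : ℕ) : isRot w (w.rotate i) := by
  rcases eq_or_ne w [] with rfl | hw
  · exact ⟨[], [], rfl, by simp⟩
  · rw [← List.rotate_mod]
    have hlt : i % w.length < w.length := Nat.mod_lt _ (List.length_pos_iff.mpr hw)
    exact ⟨w.take (i % w.length), w.drop (i % w.length), (List.take_append_drop _ w).symm,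
      List.rotate_eq_drop_append_take hlt.le⟩

lemma cfac_iff {f w : List A} : isCFactor f w ↔ ∃ i, f <+: w.rotate i := by
  constructor
  · rintro ⟨r, ⟨s, t, rfl, rfl⟩, p, q, hpq⟩
    refine ⟨s.length + p.length, ?_⟩
    have h1 : (s ++ t).rotate s.length = t ++ s := by
      rw [List.rotate_eq_drop_append_take (by simp), List.drop_left, List.take_left]
    rw [← List.rotate_rotate, h1]
    have h2 : p.length ≤ (t ++ s).length := by
      have := congrArg List.length hpq; simp at this ⊢; omega
    rw [List.rotate_eq_drop_append_take h2]
    have : (t ++ s).drop p.length = f ++ q := by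
      rw [← hpq, List.append_assoc, List.drop_left]
    rw [this]
    exact ⟨q ++ (t++s).take p.length, by simp⟩
  · rintro ⟨i, h⟩
    exact ⟨w.rotate i, rot_isRot w i, h.isInfix⟩

lemma cfac_of_infix {g f w : List A} (h : g <:+: f) (hf : isCFactor f w) : isCFactor g w := by
  obtain ⟨r, hr, hfr⟩ := hf
  exact ⟨r, hr, h.trans hfr⟩

lemma cfac_mem {f w : List A} (hf : isCFactor f w) {c : A} (hc : c ∈ f) : c ∈ w := by
  obtain ⟨r, ⟨s, t, rfl, rfl⟩, hfr⟩ := hf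
  have := hfr.subset hc
  simp at this ⊢
  tauto

lemma first_diff {y z : List A} (hl : y.length = z.length) (hne : y ≠ z) :
    ∃ (p y' z' : List A) (c d : A), c ≠ d ∧ y = p ++ c :: y' ∧ z = p ++ d :: z' := by
  induction y generalizing z with
  | nil => cases z with
    | nil => exact absurd rfl hne
    | cons d zs => simp at hl
  | cons c ys ih =>
    cases z with
    | nil => simp at hl
    | cons d zs =>
      by_cases hcd : c = d
      · subst hcd
        have hys : ys ≠ zs := by rintro rfl; exact hne rfl
        obtain ⟨p, y', z', c', d', h1, h2, h3⟩ := ih (by simpa using hl) hys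
        exact ⟨c :: p, y', z', c', d', h1, by simp [h2], by simp [h3]⟩
      · exact ⟨[], ys, zs, c, d, hcd, rfl, rfl⟩

/-- core overlap lemma -/
lemma overlapL [DecidableEq A] {a b : A} (hab : a ≠ b) {x : List A} (hx : x = x.reverse)
    {ℓ : ℕ} (h1 : 1 ≤ ℓ) (h2 : ℓ ≤ x.length + 1)
    (h : (a :: (x ++ [a])).drop (x.length + 2 - ℓ) = (b :: (x ++ [b])).take ℓ) : False := by
  set u := a :: (x ++ [a]) with hu
  have hlen : u.length = x.length + 2 := by simp [hu]
  have hupal : u.reverse = u := by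
    simp [hu, List.reverse_append]
    exact hx.symm
  have e1 : (u.drop (x.length + 2 - ℓ)).count a = (u.take ℓ).count a := by
    have h3 : (u.take ℓ).reverse = u.reverse.drop (u.length - ℓ) := List.reverse_take ..
    rw [hupal, hlen] at h3
    rw [← h3, List.count_reverse]
  have e2 : u.take ℓ = a :: x.take (ℓ - 1) := by
    obtain ⟨k, rfl⟩ : ∃ k, ℓ = k + 1 := ⟨ℓ - 1, by omega⟩
    simp [hu, List.take_append_of_le_length (by omega : k ≤ x.length)]
  have e3 : (b :: (x ++ [b])).take ℓ = b :: x.take (ℓ - 1) := by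
    obtain ⟨k, rfl⟩ : ∃ k, ℓ = k + 1 := ⟨ℓ - 1, by omega⟩
    simp [List.take_append_of_le_length (by omega : k ≤ x.length)]
  rw [e3] at h
  have h4 := congrArg (List.count a) h
  rw [e1, e2] at h4
  simp [List.count_cons, hab, Ne.symm hab] at h4

end helpers

lemma part2 {A : Type*} [DecidableEq A] {a b : A} (hab : a ≠ b) {w : List A} (hw : w ≠ [])
    {x : List A} (hx : x = x.reverse)
    (hu : isCFactor (a :: (x ++ [a])) w) (hv : isCFactor (b :: (x ++ [b])) w) :
    ∃ r : List A, isRot w ((a :: (x ++ [a])) ++ r) ∧ (b :: (x ++ [b])) <:+: r := by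
  set u := a :: (x ++ [a]) with hu'
  set v := b :: (x ++ [b]) with hv'
  set N := w.length with hN'
  have hN : 0 < N := List.length_pos_iff.mpr hw
  set m := x.length + 2 with hm'
  have hum : u.length = m := by simp [hu', hm']
  have hvm : v.length = m := by simp [hv', hm']
  -- positions
  obtain ⟨i0, hui0⟩ := cfac_iff.mp hu
  obtain ⟨j0, hvj0⟩ := cfac_iff.mp hv
  rw [← List.rotate_mod] at hui0 hvj0
  set i := i0 % w.length with hi'
  set j := j0 % w.length with hj'
  have hiN : i < N := Nat.mod_lt _ hN
  have hjN : j < N := Nat.mod_lt _ hN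
  set W := w.rotate i with hW'
  have hWlen : W.length = N := by simp [hW', hN']
  -- the shift d
  obtain ⟨d, hdN, hWd⟩ : ∃ d, d < N ∧ w.rotate j = W.rotate d := by
    rcases le_or_gt i j with h | h
    · exact ⟨j - i, by omega, by rw [hW', List.rotate_rotate]; congr 1; omega⟩
    · refine ⟨j + N - i, by omega, ?_⟩
      rw [hW', List.rotate_rotate]
      have h7 : i + (j + N - i) = j + N := by omega
      have h8 : (j + N) % w.length = j := by
        rw [← hN', Nat.add_mod_right]
        exact Nat.mod_eq_of_lt hjN
      rw [h7, ← List.rotate_mod w (j + N), h8]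
  rw [hWd] at hvj0
  have e_u : u = W.take m := by rw [← hum]; exact List.prefix_iff_eq_take.mp hui0
  have hmN : m ≤ N := by
    have := hui0.length_le; rw [hum, hWlen] at this; exact this
  have e_v : v = (W.rotate d).take m := by
    rw [← hvm]; exact List.prefix_iff_eq_take.mp hvj0
  have hrot : W.rotate d = W.drop d ++ W.take d :=
    List.rotate_eq_drop_append_take (by omega)
  -- Case 1 impossible : d < m
  have hmd : m ≤ d := by
    by_contra hc
    push_neg at hc
    rcases Nat.eq_zero_or_pos d with rfl | hd1
    · rw [List.rotate_zero, ← e_u] at e_v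
      rw [hv', hu'] at e_v
      exact hab (by injection e_v.symm)
    · refine overlapL hab hx (ℓ := m - d) (by omega) (by omega) ?_
      have key : u.drop d = v.take (m - d) := by
        rw [e_u, e_v, List.drop_take, List.take_take, min_eq_left (by omega),
          hrot, List.take_append_of_le_length (by rw [List.length_drop]; omega)]
      rw [← hu', ← hv']
      have : x.length + 2 - (m - d) = d := by omega
      rw [this]
      exact key
  -- Case 2 impossible : N < d + m
  have hdm : d + m ≤ N := by
    by_contra hc
    push_neg at hc
    refine overlapL hab.symm hx (ℓ := d + m - N) (by omega) (by omega) ?_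
    rw [← hu', ← hv']
    have h5 : x.length + 2 - (d + m - N) = N - d := by omega
    rw [h5]
    have key : v.drop (N - d) = W.take (d + m - N) := by
      rw [e_v, List.drop_take, hrot]
      have h6 : (W.drop d).length = N - d := by rw [List.length_drop]; omega
      rw [← h6, List.drop_left, h6, List.take_take, min_eq_left (by omega)]
      congr 1
      omega
    have key2 : u.take (d + m - N) = W.take (d + m - N) := by
      rw [e_u, List.take_take, min_eq_left (by omega)]
    rw [key, key2]
  -- conclusion
  refine ⟨W.drop m, ?_, ?_⟩
  · have : u ++ W.drop m = W := by rw [e_u, List.take_append_drop]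
    rw [this, hW']
    exact rot_isRot w i
  · have e_v2 : v = (W.drop d).take m := by
      rw [e_v, hrot, List.take_append_of_le_length (by rw [List.length_drop]; omega)]
    have e_d : W.drop d = (W.drop m).drop (d - m) := by
      rw [List.drop_drop]
      congr 1
      omega
    rw [e_v2, e_d]
    exact ((List.take_prefix _ _).isInfix).trans (List.drop_suffix _ _).isInfix

lemma extraction {A : Type*} [LinearOrder A] {a b : A} (hab : a < b) {w : List A}
    (hbin : ∀ c ∈ w, c = a ∨ c = b)
    (u0 v0 : List A) (hu0 : isCFactor u0 w) (hv0 : isCFactor v0 w)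
    (hl0 : u0.length = v0.length)
    (hc0 : 2 ≤ (u0.count a : ℤ) - (v0.count a : ℤ)) :
    ∃ x : List A, x = x.reverse ∧
      isCFactor (a :: (x ++ [a])) w ∧ isCFactor (b :: (x ++ [b])) w := by
  classical
  -- generic count identities
  have ic : ∀ (l : List A) (h : A), ((h :: l).count a : ℤ)
      = l.count a + (if h = a then 1 else 0) := by
    intro l h
    rcases eq_or_ne h a with rfl | hh
    · simp [List.count_cons]
    · simp [List.count_cons, hh, Ne.symm hh]
  have is' : ∀ (l : List A) (h : A), ((l ++ [h]).count a : ℤ)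
      = l.count a + (if h = a then 1 else 0) := by
    intro l h
    rcases eq_or_ne h a with rfl | hh
    · simp [List.count_append, List.count_cons]
    · simp [List.count_append, List.count_cons, hh, Ne.symm hh]
  set P : ℕ → Prop := fun k => ∃ U V : List A, isCFactor U w ∧ isCFactor V w ∧
    U.length = k ∧ V.length = k ∧ 2 ≤ (U.count a : ℤ) - (V.count a : ℤ) with hP
  have hPex : ∃ k, P k := ⟨u0.length, u0, v0, hu0, hv0, rfl, hl0.symm, hc0⟩
  set n := Nat.find hPex with hn
  obtain ⟨u, v, hu, hv, hlu, hlv, hcnt⟩ := Nat.find_spec hPex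
  rw [← hn] at hlu hlv
  have hmin : ∀ k, k < n → ¬ P k := fun k hk => Nat.find_min hPex hk
  -- n ≥ 2
  have h2n : 2 ≤ n := by
    by_contra hc
    have h1 := List.count_le_length (a := a) (l := u)
    rw [hlu] at h1
    omega
  -- the difference is exactly 2
  have hA : (u.count a : ℤ) - (v.count a : ℤ) = 2 := by
    by_contra hc
    apply hmin (n-1) (by omega)
    refine ⟨u.take (n-1), v.take (n-1),
      cfac_of_infix (List.take_prefix _ _).isInfix hu,
      cfac_of_infix (List.take_prefix _ _).isInfix hv,
      by rw [List.length_take, hlu]; omega,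
      by rw [List.length_take, hlv]; omega, ?_⟩
    have e1 : u.count a = (u.take (n-1)).count a + (u.drop (n-1)).count a := by
      rw [← List.count_append, List.take_append_drop]
    have e2 : (u.drop (n-1)).count a ≤ 1 := by
      refine le_trans (List.count_le_length (a := a)) ?_
      rw [List.length_drop, hlu]; omega
    have e3 : v.count a = (v.take (n-1)).count a + (v.drop (n-1)).count a := by
      rw [← List.count_append, List.take_append_drop]
    omega
  clear hcnt
  -- decompose u and v
  obtain ⟨c, u₁, rfl⟩ := List.exists_cons_of_ne_nil
    (show u ≠ [] by intro h; rw [h] at hlu; simp at hlu; omega)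
  obtain ⟨y, e, rfl⟩ := u₁.eq_nil_or_concat.resolve_left
    (by intro h; rw [h] at hlu; simp at hlu; omega)
  obtain ⟨c', v₁, rfl⟩ := List.exists_cons_of_ne_nil
    (show v ≠ [] by intro h; rw [h] at hlv; simp at hlv; omega)
  obtain ⟨z, e', rfl⟩ := v₁.eq_nil_or_concat.resolve_left
    (by intro h; rw [h] at hlv; simp at hlv; omega)
  simp only [List.concat_eq_append] at hu hv hlu hlv hA
  have hly : y.length + 2 = n := by simp at hlu; omega
  have hlz : z.length + 2 = n := by simp at hlv; omega
  -- the two shorter-pair constraints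
  have t1 : ¬ (2 ≤ ((y ++ [e]).count a : ℤ) - ((z ++ [e']).count a : ℤ)) := by
    intro hcontra
    refine hmin (n-1) (by omega) ⟨y ++ [e], z ++ [e'],
      cfac_of_infix (List.IsSuffix.isInfix ⟨[c], rfl⟩) hu,
      cfac_of_infix (List.IsSuffix.isInfix ⟨[c'], rfl⟩) hv,
      by simp only [List.length_append, List.length_cons, List.length_nil]; omega,
      by simp only [List.length_append, List.length_cons, List.length_nil]; omega, hcontra⟩
  have t2 : ¬ (2 ≤ ((c :: y).count a : ℤ) - ((c' :: z).count a : ℤ)) := by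
    intro hcontra
    refine hmin (n-1) (by omega) ⟨c :: y, c' :: z,
      cfac_of_infix (List.IsPrefix.isInfix ⟨[e], by simp⟩) hu,
      cfac_of_infix (List.IsPrefix.isInfix ⟨[e'], by simp⟩) hv,
      by simp only [List.length_cons]; omega,
      by simp only [List.length_cons]; omega, hcontra⟩
  have eu : ((c :: (y ++ [e])).count a : ℤ)
      = (if c = a then 1 else 0) + y.count a + (if e = a then 1 else 0) := by
    rw [ic, is']; ring
  have ev : ((c' :: (z ++ [e'])).count a : ℤ)
      = (if c' = a then 1 else 0) + z.count a + (if e' = a then 1 else 0) := by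
    rw [ic, is']; ring
  have et1u : (((y ++ [e])).count a : ℤ) = y.count a + (if e = a then 1 else 0) := is' ..
  have et1v : (((z ++ [e'])).count a : ℤ) = z.count a + (if e' = a then 1 else 0) := is' ..
  have et2u : (((c :: y)).count a : ℤ) = y.count a + (if c = a then 1 else 0) := ic ..
  have et2v : (((c' :: z)).count a : ℤ) = z.count a + (if c' = a then 1 else 0) := ic ..
  -- determine the four boundary letters
  have hca : c = a := by
    rcases hbin c (cfac_mem hu (by simp)) with h | h
    · exact h
    exfalso; apply t1
    rw [if_neg (show ¬ c = a by rw [h]; exact hab.ne')] at eu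
    have h2 : (0:ℤ) ≤ if c' = a then (1:ℤ) else 0 := by split <;> omega
    omega
  have hc'b : c' = b := by
    rcases hbin c' (cfac_mem hv (by simp)) with h | h
    · exfalso; apply t1
      rw [if_pos hca] at eu
      rw [if_pos h] at ev
      omega
    · exact h
  rw [if_pos hca] at eu et2u
  rw [if_neg (show ¬ c' = a by rw [hc'b]; exact hab.ne')] at ev et2v
  have hea : e = a := by
    rcases hbin e (cfac_mem hu (by simp)) with h | h
    · exact h
    exfalso; apply t2
    rw [if_neg (show ¬ e = a by rw [h]; exact hab.ne')] at eu
    have h2 : (0:ℤ) ≤ if e' = a then (1:ℤ) else 0 := by split <;> omega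
    omega
  have he'b : e' = b := by
    rcases hbin e' (cfac_mem hv (by simp)) with h | h
    · exfalso; apply t2
      rw [if_pos hea] at eu
      rw [if_pos h] at ev
      omega
    · exact h
  rw [if_pos hea] at eu et1u
  rw [if_neg (show ¬ e' = a by rw [he'b]; exact hab.ne')] at ev et1v
  -- counts of the interiors agree
  have hyz_cnt : (y.count a : ℤ) = z.count a := by omega
  rw [hca, hea] at hu
  rw [hc'b, he'b] at hv
  -- y = z
  have hyz : y = z := by
    by_contra hne
    obtain ⟨p, y₂, z₂, g, g', hgg', hyd, hzd⟩ := first_diff (by omega) hne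
    have hpy := congrArg List.length hyd
    have hpz := congrArg List.length hzd
    simp only [List.length_append, List.length_cons] at hpy hpz
    have hcy : (y.count a : ℤ) = p.count a + (y₂.count a + (if g = a then 1 else 0)) := by
      rw [hyd]; push_cast [List.count_append]; try rw [ic]
      try ring
    have hcz : (z.count a : ℤ) = p.count a + (z₂.count a + (if g' = a then 1 else 0)) := by
      rw [hzd]; push_cast [List.count_append]; try rw [ic]
      try ring
    rcases hbin g (cfac_mem hu (by rw [hyd]; simp)) with hg | hg <;>
      rcases hbin g' (cfac_mem hv (by rw [hzd]; simp)) with hg' | hg' <;>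
      rw [hg] at hyd hcy <;> rw [hg'] at hzd hcz
    · exact absurd (hg.trans hg'.symm) hgg'
    · -- prefix pair (a :: p ++ [a], b :: p ++ [b])
      apply hmin (p.length + 2) (by omega)
      refine ⟨a :: (p ++ [a]), b :: (p ++ [b]),
        cfac_of_infix (List.IsPrefix.isInfix
          (show (a :: (p ++ [a])) <+: (a :: (y ++ [a])) from ⟨y₂ ++ [a], by rw [hyd]; simp⟩)) hu,
        cfac_of_infix (List.IsPrefix.isInfix
          (show (b :: (p ++ [b])) <+: (b :: (z ++ [b])) from ⟨z₂ ++ [b], by rw [hzd]; simp⟩)) hv,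
        by simp, by simp, ?_⟩
      rw [ic, is', ic, is']
      have h5 : (if a = a then (1:ℤ) else 0) = 1 := if_pos rfl
      have h6 : (if b = a then (1:ℤ) else 0) = 0 := if_neg hab.ne'
      rw [h5, h6]
      omega
    · -- suffix pair (y₂ ++ [a], z₂ ++ [b])
      apply hmin (y₂.length + 1) (by omega)
      refine ⟨y₂ ++ [a], z₂ ++ [b],
        cfac_of_infix (List.IsSuffix.isInfix
          (show (y₂ ++ [a]) <:+ (a :: (y ++ [a])) from ⟨a :: p ++ [b], by rw [hyd]; simp⟩)) hu,
        cfac_of_infix (List.IsSuffix.isInfix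
          (show (z₂ ++ [b]) <:+ (b :: (z ++ [b])) from ⟨b :: p ++ [a], by rw [hzd]; simp⟩)) hv,
        by simp, by simp; omega, ?_⟩
      rw [is', is']
      have h5 : (if a = a then (1:ℤ) else 0) = 1 := if_pos rfl
      have h6 : (if b = a then (1:ℤ) else 0) = 0 := if_neg hab.ne'
      rw [h5, h6]
      rw [h6] at hcy
      rw [h5] at hcz
      omega
    · exact absurd (hg.trans hg'.symm) hgg'
  rw [← hyz] at hv hlz
  -- y is a palindrome
  have hpal : y = y.reverse := by
    by_contra hne
    obtain ⟨p, y₂, z₂, g, g', hgg', hyd, hzd⟩ := first_diff (by simp) hne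
    have hyd2 : y = z₂.reverse ++ g' :: p.reverse := by
      have h9 := congrArg List.reverse hzd
      simpa using h9
    have hpy := congrArg List.length hyd
    simp only [List.length_append, List.length_cons] at hpy
    rcases hbin g (cfac_mem hu (by rw [hyd]; simp)) with hg | hg <;>
      rcases hbin g' (cfac_mem hu (by rw [hyd2]; simp)) with hg' | hg' <;>
      rw [hg] at hyd <;> rw [hg'] at hyd2
    · exact absurd (hg.trans hg'.symm) hgg'
    · apply hmin (p.length + 2) (by omega)
      refine ⟨a :: (p ++ [a]), b :: (p.reverse ++ [b]),
        cfac_of_infix (List.IsPrefix.isInfix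
          (show (a :: (p ++ [a])) <+: (a :: (y ++ [a])) from ⟨y₂ ++ [a], by rw [hyd]; simp⟩)) hu,
        cfac_of_infix (List.IsSuffix.isInfix
          (show (b :: (p.reverse ++ [b])) <:+ (b :: (y ++ [b])) from
            ⟨b :: z₂.reverse, by rw [hyd2]; simp⟩)) hv,
        by simp, by simp, ?_⟩
      rw [ic, is', ic, is', List.count_reverse]
      have h5 : (if a = a then (1:ℤ) else 0) = 1 := if_pos rfl
      have h6 : (if b = a then (1:ℤ) else 0) = 0 := if_neg hab.ne'
      rw [h5, h6]
      omega
    · apply hmin (p.length + 2) (by omega)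
      refine ⟨a :: (p.reverse ++ [a]), b :: (p ++ [b]),
        cfac_of_infix (List.IsSuffix.isInfix
          (show (a :: (p.reverse ++ [a])) <:+ (a :: (y ++ [a])) from
            ⟨a :: z₂.reverse, by rw [hyd2]; simp⟩)) hu,
        cfac_of_infix (List.IsPrefix.isInfix
          (show (b :: (p ++ [b])) <+: (b :: (y ++ [b])) from ⟨y₂ ++ [b], by rw [hyd]; simp⟩)) hv,
        by simp, by simp, ?_⟩
      rw [ic, is', ic, is', List.count_reverse]
      have h5 : (if a = a then (1:ℤ) else 0) = 1 := if_pos rfl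
      have h6 : (if b = a then (1:ℤ) else 0) = 0 := if_neg hab.ne'
      rw [h5, h6]
      omega
    · exact absurd (hg.trans hg'.symm) hgg'
  exact ⟨y, hpal, hu, hv⟩

theorem stmt19 {A : Type*} [LinearOrder A] (a b : A) (hab : a < b) (w : List A)
    (hbin : ∀ c ∈ w, c = a ∨ c = b) (hne : w ≠ []) :
    ((¬ ∀ u v : List A, isCFactor u w → isCFactor v w → u.length = v.length →
        ((u.count a : ℤ) - (v.count a : ℤ)).natAbs ≤ 1) ↔
      ∃ x : List A, x = x.reverse ∧
        isCFactor (a :: (x ++ [a])) w ∧ isCFactor (b :: (x ++ [b])) w) ∧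
    (∀ x : List A, x = x.reverse →
      isCFactor (a :: (x ++ [a])) w → isCFactor (b :: (x ++ [b])) w →
        ∃ r : List A, isRot w ((a :: (x ++ [a])) ++ r) ∧ (b :: (x ++ [b])) <:+: r) := by
  constructor
  · constructor
    · intro hnb
      push_neg at hnb
      obtain ⟨u, v, hu, hv, hl, hcnt⟩ := hnb
      rcases le_or_gt 2 ((u.count a : ℤ) - (v.count a : ℤ)) with h | h
      · exact extraction hab hbin u v hu hv hl h
      · exact extraction hab hbin v u hv hu hl.symm (by omega)
    · rintro ⟨x, hx, hux, hvx⟩ hbal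
      have h1 := hbal _ _ hux hvx (by simp)
      have e1 : (a :: (x ++ [a])).count a = x.count a + 2 := by
        simp [List.count_cons, List.count_append]
      have e2 : (b :: (x ++ [b])).count a = x.count a := by
        simp [List.count_cons, List.count_append, hab.ne, hab.ne']
      rw [e1, e2] at h1
      omega
  · intro x hx hux hvx
    exact part2 hab.ne hne hx hux hvx
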